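/- ODE blow-up lemma: let Y : [R₀, ∞) → (0,∞) be increasing and differentiable, μ nondecreasing positive, n ≥ 1, and suppose that for all R ≥ R₀, (c/R) · μ(c₂ R^{-n/2}) ≤ Y'(R)/Y(R)^{(n+2)/n} for some constants c, c₂ > 0. If ∫_{R₀}^∞ s^{-1} μ(c₂ s^{-n/2}) ds = ∞, then no such globally defined Y exists; equivalently, integrating gives ∫_{R₀}^R c s^{-1} μ(c₂ s^{-n/2}) ds ≤ (n/2)·Y(R₀)^{-2/n} for all R ≥ R₀, which is contradicted as R → ∞. -/

import Mathlib

open MeasureTheory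

/-- ODE blow-up lemma: a positive, increasing, differentiable `Y` on `[R₀,∞)`
satisfying `(c/R) μ(c₂ R^{-n/2}) ≤ Y'(R)/Y(R)^{(n+2)/n}` cannot exist globally if
`∫_{R₀}^∞ s^{-1} μ(c₂ s^{-n/2}) ds = ∞`. -/
theorem ode_blowup (n : ℕ) (hn : 1 ≤ n) (R₀ : ℝ) (hR₀ : 0 < R₀)
    (μ : ℝ → ℝ) (hμ_mono : MonotoneOn μ (Set.Ioi 0)) (hμ_pos : ∀ s, 0 < s → 0 < μ s)
    (Y Y' : ℝ → ℝ)
    (hY_pos : ∀ R, R₀ ≤ R → 0 < Y R)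
    (hY_incr : StrictMonoOn Y (Set.Ici R₀))
    (hY_deriv : ∀ R, R₀ ≤ R → HasDerivAt Y (Y' R) R)
    (c c₂ : ℝ) (hc : 0 < c) (hc₂ : 0 < c₂)
    (hineq : ∀ R, R₀ ≤ R →
      c / R * μ (c₂ * R ^ (-(n:ℝ) / 2)) ≤ Y' R / (Y R) ^ ((n + 2 : ℝ) / n))
    (hdiv : ¬ IntegrableOn (fun s : ℝ => s⁻¹ * μ (c₂ * s ^ (-(n:ℝ) / 2)))
      (Set.Ioi R₀) volume) :
    False := by
  set f : ℝ → ℝ := fun s => s⁻¹ * μ (c₂ * s ^ (-(n:ℝ) / 2)) with hfdef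
  have hn' : (0 : ℝ) < n := by exact_mod_cast Nat.lt_of_lt_of_le Nat.zero_lt_one hn
  have hexp_nonpos : (-(n:ℝ) / 2) ≤ 0 := by
    rw [neg_div]; exact neg_nonpos.mpr (by positivity)
  have harg : ∀ s : ℝ, 0 < s → 0 < c₂ * s ^ (-(n:ℝ) / 2) := fun s hs =>
    mul_pos hc₂ (Real.rpow_pos_of_pos hs _)
  have hf_nonneg : ∀ s : ℝ, R₀ ≤ s → 0 ≤ f s := by
    intro s hs
    have hs0 : 0 < s := hR₀.trans_le hs
    exact le_of_lt (mul_pos (inv_pos.mpr hs0) (hμ_pos _ (harg s hs0)))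
  have hf_anti : AntitoneOn f (Set.Ici R₀) := by
    intro x hx y hy hxy
    have hx0 : 0 < x := hR₀.trans_le hx
    have hy0 : 0 < y := hR₀.trans_le hy
    have harg_le : c₂ * y ^ (-(n:ℝ) / 2) ≤ c₂ * x ^ (-(n:ℝ) / 2) :=
      mul_le_mul_of_nonneg_left
        (Real.rpow_le_rpow_of_nonpos hx0 hxy hexp_nonpos) hc₂.le
    have hμle : μ (c₂ * y ^ (-(n:ℝ) / 2)) ≤ μ (c₂ * x ^ (-(n:ℝ) / 2)) :=
      hμ_mono (harg y hy0) (harg x hx0) harg_le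
    have hinv : y⁻¹ ≤ x⁻¹ := inv_anti₀ hx0 hxy
    exact mul_le_mul hinv hμle (le_of_lt (hμ_pos _ (harg y hy0))) (inv_pos.mpr hx0).le
  have hf_int : ∀ b : ℝ, IntegrableOn f (Set.Ioc R₀ b) volume := by
    intro b
    rcases le_or_gt b R₀ with hb | hb
    · rw [Set.Ioc_eq_empty (not_lt.mpr hb)]
      exact integrableOn_empty
    · exact (AntitoneOn.integrableOn_isCompact isCompact_Icc
        (hf_anti.mono Set.Icc_subset_Ici_self)).mono_set Set.Ioc_subset_Icc_self
  set g : ℝ → ℝ := fun s => -((n:ℝ) / (2 * c)) * (Y s) ^ (-2 / (n:ℝ)) with hgdef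
  set g' : ℝ → ℝ := fun s => Y' s / c * (Y s) ^ (-((n:ℝ) + 2) / n) with hg'def
  set I : ℝ := (n:ℝ) / (2 * c) * (Y R₀) ^ (-2 / (n:ℝ)) with hIdef
  have hg_deriv : ∀ s, R₀ ≤ s → HasDerivAt g (g' s) s := by
    intro s hs
    have hYs := hY_pos s hs
    have h1 : HasDerivAt (fun y => (Y y) ^ (-2 / (n:ℝ)))
        (Y' s * (-2 / (n:ℝ)) * (Y s) ^ (-2 / (n:ℝ) - 1)) s :=
      (hY_deriv s hs).rpow_const (Or.inl hYs.ne')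
    have h2 := h1.const_mul (-((n:ℝ) / (2 * c)))
    have hexp : -2 / (n:ℝ) - 1 = -((n:ℝ) + 2) / n := by
      field_simp
      ring
    have heq : g' s = -((n:ℝ) / (2 * c)) * (Y' s * (-2 / (n:ℝ)) * (Y s) ^ (-2 / (n:ℝ) - 1)) := by
      simp only [hg'def, hexp]
      field_simp
    rw [heq]
    exact h2
  have hfg : ∀ s, R₀ ≤ s → f s ≤ g' s := by
    intro s hs
    have hs0 : 0 < s := hR₀.trans_le hs
    have hYs := hY_pos s hs
    have key := hineq s hs
    have h2 : c * f s ≤ Y' s / (Y s) ^ (((n:ℝ) + 2) / n) := by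
      have : c * f s = c / s * μ (c₂ * s ^ (-(n:ℝ) / 2)) := by
        rw [hfdef]; ring
      rw [this]
      exact key
    have h3 : f s ≤ (Y' s / (Y s) ^ (((n:ℝ) + 2) / n)) / c :=
      (le_div_iff₀ hc).mpr (by linarith [h2])
    calc f s ≤ (Y' s / (Y s) ^ (((n:ℝ) + 2) / n)) / c := h3
      _ = g' s := by
        simp only [hg'def, neg_div, Real.rpow_neg hYs.le]
        ring
  have hbound : ∀ b : ℝ, R₀ ≤ b → (∫ x in R₀..b, ‖f x‖) ≤ I := by
    intro b hb
    have hnorm : (∫ x in R₀..b, ‖f x‖) = ∫ x in R₀..b, f x := by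
      apply intervalIntegral.integral_congr
      intro x hx
      rw [Set.uIcc_of_le hb] at hx
      exact Real.norm_of_nonneg (hf_nonneg x hx.1)
    rw [hnorm]
    have hcont : ContinuousOn g (Set.Icc R₀ b) := fun x hx =>
      ((hg_deriv x hx.1).continuousAt).continuousWithinAt
    have hle : (∫ x in R₀..b, f x) ≤ g b - g R₀ :=
      intervalIntegral.integral_le_sub_of_hasDeriv_right_of_le hb hcont
        (fun x hx => (hg_deriv x hx.1.le).hasDerivWithinAt)
        ((AntitoneOn.integrableOn_isCompact isCompact_Icc
          (hf_anti.mono Set.Icc_subset_Ici_self)))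
        (fun x hx => hfg x hx.1.le)
    have hgb : g b ≤ 0 := by
      rw [hgdef]
      have : (0:ℝ) < (Y b) ^ (-2 / (n:ℝ)) := Real.rpow_pos_of_pos (hY_pos b hb) _
      nlinarith [div_pos hn' (mul_pos two_pos hc)]
    have hgR₀ : -g R₀ = I := by rw [hgdef, hIdef]; ring
    linarith [hle, hgb]
  apply hdiv
  apply MeasureTheory.integrableOn_Ioi_of_intervalIntegral_norm_bounded I R₀
    (fun i : ℝ => hf_int i) (Filter.tendsto_id (α := ℝ))
  filter_upwards [Filter.eventually_ge_atTop R₀] with i hi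
  exact hbound i hi
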